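/- Let Q be a uniquely 2-divisible right Bol loop (i.e., the squaring map is a bijection of Q). For all v in Q and integers m, n, the equation (u·v^n)·u = v^m has the unique solution u = v^{(m-n)/2}, where (m-n)/2 is interpreted via the unique square root. -/

import Mathlib

/-- A right Bol loop. -/
class RightBolLoop (Q : Type*) extends Mul Q, One Q, Inv Q where
  one_mul : ∀ a : Q, 1 * a = a
  mul_one : ∀ a : Q, a * 1 = a
  mulLeft_bij : ∀ a : Q, Function.Bijective (fun x : Q => a * x)
  mulRight_bij : ∀ a : Q, Function.Bijective (fun x : Q => x * a)
  mul_inv : ∀ a : Q, a * a⁻¹ = 1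
  inv_mul : ∀ a : Q, a⁻¹ * a = 1
  rbol : ∀ w u v : Q, ((w * u) * v) * u = w * ((u * v) * u)

variable {Q : Type*} [RightBolLoop Q]

/-- Natural powers in a loop. -/
def lpow (a : Q) : ℕ → Q
  | 0 => 1
  | n + 1 => lpow a n * a

/-- Integer powers in a loop with inverses. -/
def lzpow (a : Q) : ℤ → Q
  | Int.ofNat n => lpow a n
  | Int.negSucc n => (lpow a (n + 1))⁻¹

/-- Right translation as a permutation. -/
noncomputable def rmul (a : Q) : Equiv.Perm Q := Equiv.ofBijective _ (RightBolLoop.mulRight_bij a)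

lemma rmul_apply (a x : Q) : rmul a x = x * a := rfl

lemma rmul_one_apply (a : Q) : rmul a 1 = a := RightBolLoop.one_mul a

lemma rmul_inj : Function.Injective (rmul : Q → Equiv.Perm Q) := by
  intro a b h
  rw [← rmul_one_apply a, ← rmul_one_apply b, h]

/-- The Bol identity as an identity of permutations. -/
lemma bolR (u a : Q) : rmul u * rmul a * rmul u = rmul ((u * a) * u) :=
  Equiv.ext fun w => RightBolLoop.rbol w u a

lemma rmul_one : rmul (1 : Q) = 1 :=
  Equiv.ext fun w => RightBolLoop.mul_one w

lemma rmul_sq (u : Q) : rmul u * rmul u = rmul (u * u) := by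
  have h := bolR u 1
  rwa [rmul_one, mul_one, RightBolLoop.mul_one] at h

lemma rmul_inv (a : Q) : rmul (a⁻¹ : Q) = (rmul a)⁻¹ := by
  have rip : ∀ w : Q, (w * a) * a⁻¹ = w := by
    intro w
    apply (rmul a).injective
    show ((w * a) * a⁻¹) * a = w * a
    rw [RightBolLoop.rbol w a a⁻¹, RightBolLoop.mul_inv, RightBolLoop.one_mul]
  rw [eq_inv_iff_mul_eq_one]
  exact Equiv.ext fun w => rip w

lemma lpow_val (a : Q) (k : ℕ) : lpow a k = ((rmul a) ^ k) 1 := by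
  induction k with
  | zero => rfl
  | succ k ih =>
    show lpow a k * a = _
    rw [ih, pow_succ', Equiv.Perm.mul_apply, rmul_apply]

lemma rmul_lpow (a : Q) (k : ℕ) : rmul (lpow a k) = (rmul a) ^ k := by
  induction k using Nat.strong_induction_on with
  | _ k ih =>
    match k with
    | 0 => simpa [lpow] using rmul_one
    | 1 => simp [lpow, RightBolLoop.one_mul]
    | (k + 2) =>
      have hk : rmul (lpow a k) = (rmul a) ^ k := ih k (by omega)
      have hval : lpow a (k + 2) = (a * lpow a k) * a := by
        have h1 : (a * lpow a k) * a = (rmul a * rmul (lpow a k) * rmul a) 1 := by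
          simp only [Equiv.Perm.mul_apply, rmul_apply, RightBolLoop.one_mul]
        rw [lpow_val, h1, hk]
        congr 1
        group
      rw [hval, ← bolR, hk]
      group

lemma rmul_lzpow (a : Q) (k : ℤ) : rmul (lzpow a k) = (rmul a) ^ k := by
  cases k with
  | ofNat k => rw [show lzpow a (Int.ofNat k) = lpow a k from rfl, rmul_lpow]; norm_num
  | negSucc k =>
    rw [show lzpow a (Int.negSucc k) = (lpow a (k + 1))⁻¹ from rfl, rmul_inv,
      rmul_lpow, zpow_negSucc]

/-- In a uniquely 2-divisible right Bol loop, for all `v` and integers `m, n`,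
the equation `(u·vⁿ)·u = vᵐ` has the unique solution `u = v^{(m-n)/2}`; that
is, an element `u` solves the equation if and only if `u² = v^{m-n}`,
and by unique 2-divisibility there is exactly one such `u`. -/
theorem stmt5 (hsq : Function.Bijective (fun x : Q => x * x))
    (v : Q) (m n : ℤ) :
    (∃! u : Q, (u * lzpow v n) * u = lzpow v m) ∧
    (∀ u : Q, (u * lzpow v n) * u = lzpow v m ↔ u * u = lzpow v (m - n)) := by
  obtain ⟨t, ht⟩ := hsq.surjective v
  simp only at ht
  set T := rmul t with hTdef
  have hT2 : T * T = rmul v := by rw [hTdef, rmul_sq, ht]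
  have hTv : ∀ k : ℤ, rmul (lzpow v k) = T ^ (2 * k) := by
    intro k
    have h2 : rmul v = T ^ (2 : ℤ) := by rw [← hT2]; exact (zpow_two T).symm
    rw [rmul_lzpow, h2, ← zpow_mul]
  have hTn : ∀ k : ℤ, rmul (lzpow t k) = T ^ k := fun k => rmul_lzpow t k
  have key : ∀ u : Q, (u * lzpow v n) * u = lzpow v m ↔ u * u = lzpow v (m - n) := by
    intro u
    constructor
    · intro h
      have hmap : rmul u * rmul (lzpow v n) * rmul u = rmul (lzpow v m) := by
        rw [bolR, h]
      rw [hTv, hTv] at hmap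
      -- the conjugate X = T^n * rmul u * T^n is a translation whose square is T^(2(m+n))
      have hX : T ^ n * rmul u * T ^ n = rmul ((lzpow t n * u) * lzpow t n) := by
        rw [← hTn, bolR]
      have hXsq : (T ^ n * rmul u * T ^ n) * (T ^ n * rmul u * T ^ n)
          = T ^ (m + n) * T ^ (m + n) := by
        calc (T ^ n * rmul u * T ^ n) * (T ^ n * rmul u * T ^ n)
            = T ^ n * (rmul u * T ^ (2 * n) * rmul u) * T ^ n := by group
          _ = T ^ n * T ^ (2 * m) * T ^ n := by rw [hmap]
          _ = T ^ (m + n) * T ^ (m + n) := by group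
      have hww : rmul (((lzpow t n * u) * lzpow t n) * ((lzpow t n * u) * lzpow t n))
          = rmul (lzpow t (m + n) * lzpow t (m + n)) := by
        rw [← rmul_sq, ← rmul_sq, ← hX, hTn, hXsq]
      have hws : (lzpow t n * u) * lzpow t n = lzpow t (m + n) :=
        hsq.injective (rmul_inj hww)
      have hA : rmul u = T ^ (m - n) := by
        have h2 : T ^ n * rmul u * T ^ n = T ^ (m + n) := by
          rw [hX, hws, hTn]
        calc rmul u = T ^ (-n) * (T ^ n * rmul u * T ^ n) * T ^ (-n) := by group
          _ = T ^ (-n) * T ^ (m + n) * T ^ (-n) := by rw [h2]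
          _ = T ^ (m - n) := by group
      have : rmul (u * u) = rmul (lzpow v (m - n)) := by
        rw [← rmul_sq, hA, hTv]
        group
      exact rmul_inj this
    · intro h
      have hs : lzpow t (m - n) * lzpow t (m - n) = lzpow v (m - n) := by
        apply rmul_inj
        rw [← rmul_sq, hTn, hTv]
        group
      have hu : u = lzpow t (m - n) := hsq.injective (h.trans hs.symm)
      have hmap : rmul u * rmul (lzpow v n) * rmul u = rmul (lzpow v m) := by
        rw [hu, hTn, hTv, hTv]
        group
      have e1 : (rmul u * rmul (lzpow v n) * rmul u) 1 = (u * lzpow v n) * u := by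
        simp only [Equiv.Perm.mul_apply, rmul_apply, RightBolLoop.one_mul]
      rw [← e1, hmap, rmul_one_apply]
  refine ⟨?_, key⟩
  obtain ⟨r, hr⟩ := hsq.surjective (lzpow v (m - n))
  simp only at hr
  exact ⟨r, (key r).mpr hr, fun y hy => hsq.injective (((key y).mp hy).trans hr.symm)⟩
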